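/- If a real r×n matrix H satisfies ||Hz||₀ ≥ 2l+1 for all nonzero z with ||z||₀ ≤ 2t (with t ≥ 1, n ≥ 2t), then any 2t columns of H are linearly independent, and in particular r ≥ 2t + 2l ≥ 2t. -/

import Mathlib

open Matrix Finset

/-- Hamming weight (number of nonzero coordinates) of a real vector. -/
noncomputable def wt {m : ℕ} (v : Fin m → ℝ) : ℕ := (Finset.univ.filter (fun i => v i ≠ 0)).card

theorem CS_implies_columns_indep {r n t l : ℕ} (H : Matrix (Fin r) (Fin n) ℝ)
    (ht : 1 ≤ t) (hn : 2 * t ≤ n)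
    (hCS : ∀ z : Fin n → ℝ, z ≠ 0 → wt z ≤ 2 * t → 2 * l + 1 ≤ wt (H.mulVec z)) :
    (∀ z : Fin n → ℝ, z ≠ 0 → wt z ≤ 2 * t → H.mulVec z ≠ 0) ∧
      2 * t + 2 * l ≤ r := by
  refine ⟨?_, ?_⟩
  · intro z hz hw h0
    have h1 := hCS z hz hw
    rw [h0] at h1
    simp [wt] at h1
  · -- first, 2*l + 1 ≤ r
    have hn0 : 0 < n := by omega
    have hr : 2 * l + 1 ≤ r := by
      set z₀ : Fin n → ℝ := Pi.single ⟨0, hn0⟩ 1 with hz₀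
      have hz0ne : z₀ ≠ 0 := by
        intro h
        have := congrFun h ⟨0, hn0⟩
        simp [hz₀] at this
      have hwz : wt z₀ ≤ 2 * t := by
        have hsub : (Finset.univ.filter (fun i => z₀ i ≠ 0)) ⊆ {⟨0, hn0⟩} := by
          intro i hi
          simp only [mem_filter, mem_univ, true_and] at hi
          simp only [mem_singleton]
          by_contra hne
          exact hi (by simp [hz₀, Pi.single_apply, hne])
        calc wt z₀ ≤ ({⟨0, hn0⟩} : Finset (Fin n)).card := Finset.card_le_card hsub
          _ = 1 := rfl
          _ ≤ 2 * t := by omega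
      have h1 := hCS z₀ hz0ne hwz
      have h2 : wt (H.mulVec z₀) ≤ r := by
        calc wt (H.mulVec z₀) ≤ Finset.univ.card := Finset.card_filter_le _ _
          _ = r := by simp
      omega
    have h2l : 2 * l ≤ r := by omega
    -- the injective linear map
    have hcast : Function.Injective (Fin.castLE hn) := Fin.castLE_injective hn
    set L : (Fin (2 * t) → ℝ) →ₗ[ℝ] (Fin (r - 2 * l) → ℝ) :=
      (LinearMap.funLeft ℝ ℝ (Fin.castLE (Nat.sub_le r (2 * l)))).comp
        (H.mulVecLin.comp (Function.ExtendByZero.linearMap ℝ (Fin.castLE hn))) with hL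
    have hinj : Function.Injective L := by
      rw [← LinearMap.ker_eq_bot, LinearMap.ker_eq_bot']
      intro z hz0
      by_contra hzne
      set z' : Fin n → ℝ := Function.extend (Fin.castLE hn) z 0 with hz'
      have hz'ne : z' ≠ 0 := by
        intro h
        apply hzne
        funext j
        have := congrFun h (Fin.castLE hn j)
        rwa [hz', hcast.extend_apply] at this
      have hwz' : wt z' ≤ 2 * t := by
        have hsub : (Finset.univ.filter (fun i => z' i ≠ 0)) ⊆
            Finset.univ.image (Fin.castLE hn) := by
          intro i hi
          simp only [mem_filter, mem_univ, true_and] at hi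
          by_contra hni
          apply hi
          rw [hz', Function.extend_apply']
          · rfl
          · intro ⟨j, hj⟩
            exact hni (Finset.mem_image.mpr ⟨j, Finset.mem_univ j, hj⟩)
        calc wt z' ≤ (Finset.univ.image (Fin.castLE hn)).card := Finset.card_le_card hsub
          _ = (Finset.univ : Finset (Fin (2 * t))).card := Finset.card_image_of_injective _ hcast
          _ = 2 * t := by simp
      have h1 := hCS z' hz'ne hwz'
      -- but H.mulVec z' vanishes on the first r - 2*l coordinates
      have hvan : ∀ i : Fin r, (i : ℕ) < r - 2 * l → H.mulVec z' i = 0 := by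
        intro i hi
        have := congrFun hz0 ⟨(i : ℕ), hi⟩
        have h' : (Function.ExtendByZero.linearMap ℝ (Fin.castLE hn)) z = z' := rfl
        simpa [hL, LinearMap.funLeft, Fin.castLE, h'] using this
      have h2 : wt (H.mulVec z') ≤ 2 * l := by
        have hsub : (Finset.univ.filter (fun i => H.mulVec z' i ≠ 0)) ⊆
            Finset.univ.filter (fun i : Fin r => r - 2 * l ≤ (i : ℕ)) := by
          intro i hi
          simp only [mem_filter, mem_univ, true_and] at hi ⊢
          by_contra hlt
          exact hi (hvan i (by omega))
        have hcard : (Finset.univ.filter (fun i : Fin r => r - 2 * l ≤ (i : ℕ))).card ≤ 2 * l := by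
          have := Finset.card_le_card_of_injOn (fun i : Fin r => (i : ℕ) - (r - 2 * l))
            (s := Finset.univ.filter (fun i : Fin r => r - 2 * l ≤ (i : ℕ)))
            (t := Finset.range (2 * l))
            (by
              intro i hi
              simp only [Finset.mem_coe, mem_filter, mem_univ, true_and] at hi
              have := i.isLt
              simp only [Finset.mem_coe, Finset.mem_range]
              omega)
            (by
              intro i hi j hj hij
              simp only [Finset.coe_filter, Set.mem_setOf_eq, mem_univ, true_and] at hi hj
              have hij' : (i : ℕ) - (r - 2 * l) = (j : ℕ) - (r - 2 * l) := hij
              have : (i : ℕ) = (j : ℕ) := by omega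
              exact Fin.ext this)
          simpa using this
        exact le_trans (Finset.card_le_card hsub) hcard
      omega
    have hdim := LinearMap.finrank_le_finrank_of_injective hinj
    simp only [Module.finrank_fin_fun] at hdim
    omega
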